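/- arXiv:math/0612384 — 2 statements merged into one kernel-verified Lean document; each statement's English description precedes it below -/
import Mathlib

section
/- Let R₊ ⊂ ℝ⁸ be the set of positive roots of type E₈: R₊ = {−e_i + e_j, e_i + e_j : 1 ≤ i < j ≤ 8} ∪ {½(e₈ + Σ_{i=1}^{7} (−1)^{ν(i)} e_i) : ν : {1,…,7} → {0,1} with Σ_{i=1}^{7} ν(i) even}. Then for every nonzero H ∈ ℝ⁸ that is not proportional to any element of R₊, the set S_H = {v_H(α) : α ∈ R₊, ⟪α,H⟫ ≠ 0}, where v_H(α) = α/⟪α,H⟫ − H/‖H‖², is NOT invariant under negation: S_H ≠ −S_H. -/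
open scoped RealInnerProductSpace
open Finset

/-- The E₈ lattice, described by doubled coordinates. -/
def memL (x : EuclideanSpace ℝ (Fin 8)) : Prop :=
  ∃ a : Fin 8 → ℤ, (∀ i, 2 * x i = (a i : ℝ)) ∧ (∀ i j, a i % 2 = a j % 2) ∧
    ∃ m : ℤ, ∑ i, a i = 4 * m

lemma memL_neg {x : EuclideanSpace ℝ (Fin 8)} (hx : memL x) : memL (-x) := by
  obtain ⟨a, ha, hp, m, hm⟩ := hx
  refine ⟨fun i => -a i, fun i => ?_, fun i j => ?_, -m, ?_⟩
  · have := ha i; push_cast; simp only [PiLp.neg_apply]; linarith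
  · show (-a i) % 2 = (-a j) % 2
    have := hp i j; omega
  · show ∑ i, -a i = 4 * (-m)
    rw [Finset.sum_neg_distrib, hm]; ring

lemma memL_sub {x y : EuclideanSpace ℝ (Fin 8)} (hx : memL x) (hy : memL y) :
    memL (x - y) := by
  obtain ⟨a, ha, hp, m, hm⟩ := hx
  obtain ⟨b, hb, hq, m', hm'⟩ := hy
  refine ⟨fun i => a i - b i, fun i => ?_, fun i j => ?_, m - m', ?_⟩
  · have := ha i; have := hb i; push_cast; simp only [PiLp.sub_apply]; linarith
  · show (a i - b i) % 2 = (a j - b j) % 2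
    have h1 := hp i j; have h2 := hq i j; omega
  · show ∑ i, (a i - b i) = 4 * (m - m')
    rw [Finset.sum_sub_distrib, hm, hm']; ring

lemma inner_eq_sum (x y : EuclideanSpace ℝ (Fin 8)) : ⟪x, y⟫ = ∑ i, x i * y i := by
  simp [PiLp.inner_apply, RCLike.inner_apply, mul_comm]

lemma sum_mul_even_aux (s b : Fin 8 → ℤ) (m₁ : ℤ) (hs : ∑ i, s i = 2 * m₁)
    (hb : ∀ i j, b i % 2 = b j % 2) :
    ∃ m, ∑ i, (2 * s i) * b i = 4 * m := by
  obtain ⟨u, hu⟩ : ∃ u : Fin 8 → ℤ, ∀ i, b i = b 0 + 2 * u i :=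
    ⟨fun i => (b i - b 0) / 2, fun i => by
      show b i = b 0 + 2 * ((b i - b 0) / 2); have := hb i 0; omega⟩
  refine ⟨b 0 * m₁ + ∑ i, s i * u i, ?_⟩
  have : ∀ i ∈ Finset.univ, (2 * s i) * b i
      = 2 * (b 0) * s i + 4 * (s i * u i) := by
    intro i _; rw [hu i]; ring
  rw [Finset.sum_congr rfl this, Finset.sum_add_distrib, ← Finset.mul_sum, ← Finset.mul_sum, hs]
  ring

lemma sum_mul_odd_aux (s t : Fin 8 → ℤ) (m₁ m₂ : ℤ)
    (hs : ∑ i, (2 * s i + 1) = 4 * m₁) (ht : ∑ i, (2 * t i + 1) = 4 * m₂) :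
    ∃ m, ∑ i, (2 * s i + 1) * (2 * t i + 1) = 4 * m := by
  have hs' : 2 * ∑ i, s i + 8 = 4 * m₁ := by
    rw [← hs, Finset.sum_add_distrib, Finset.mul_sum]
    simp only [Finset.sum_const, Finset.card_univ, Fintype.card_fin, nsmul_eq_mul, mul_one]
    push_cast; ring
  have ht' : 2 * ∑ i, t i + 8 = 4 * m₂ := by
    rw [← ht, Finset.sum_add_distrib, Finset.mul_sum]
    simp only [Finset.sum_const, Finset.card_univ, Fintype.card_fin, nsmul_eq_mul, mul_one]
    push_cast; ring
  refine ⟨(∑ i, s i * t i) + m₁ + m₂ - 2, ?_⟩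
  have : ∀ i ∈ Finset.univ, (2 * s i + 1) * (2 * t i + 1)
      = 4 * (s i * t i) + (2 * s i + (2 * t i + 1)) := fun i _ => by ring
  rw [Finset.sum_congr rfl this, Finset.sum_add_distrib, Finset.sum_add_distrib,
    Finset.sum_add_distrib, ← Finset.mul_sum, ← Finset.mul_sum, ← Finset.mul_sum]
  simp only [Finset.sum_const, Finset.card_univ, Fintype.card_fin, nsmul_eq_mul, mul_one]
  push_cast
  omega

lemma int_sum_mul (a b : Fin 8 → ℤ) (hpa : ∀ i j, a i % 2 = a j % 2)
    (hpb : ∀ i j, b i % 2 = b j % 2) (m₁ m₂ : ℤ)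
    (hma : ∑ i, a i = 4 * m₁) (hmb : ∑ i, b i = 4 * m₂) :
    ∃ m, ∑ i, a i * b i = 4 * m := by
  rcases Int.emod_two_eq (a 0) with h0 | h0
  · -- a even
    have ha : ∀ i, a i = 2 * (a i / 2) := fun i => by have := hpa i 0; omega
    have hs : ∑ i, a i / 2 = 2 * m₁ := by
      have h : ∑ i, a i = ∑ i, 2 * (a i / 2) := Finset.sum_congr rfl fun i _ => ha i
      rw [h, ← Finset.mul_sum] at hma; omega
    obtain ⟨m, hm⟩ := sum_mul_even_aux (fun i => a i / 2) b m₁ hs hpb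
    refine ⟨m, ?_⟩
    rw [← hm]
    exact Finset.sum_congr rfl fun i _ => by rw [← ha i]
  · rcases Int.emod_two_eq (b 0) with h1 | h1
    · -- b even
      have hbb : ∀ i, b i = 2 * (b i / 2) := fun i => by have := hpb i 0; omega
      have hs : ∑ i, b i / 2 = 2 * m₂ := by
        have h : ∑ i, b i = ∑ i, 2 * (b i / 2) := Finset.sum_congr rfl fun i _ => hbb i
        rw [h, ← Finset.mul_sum] at hmb; omega
      obtain ⟨m, hm⟩ := sum_mul_even_aux (fun i => b i / 2) a m₂ hs hpa
      refine ⟨m, ?_⟩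
      rw [← hm]
      refine Finset.sum_congr rfl fun i _ => ?_
      rw [← hbb i]
      ring
    · -- both odd
      have ha : ∀ i, a i = 2 * (a i / 2) + 1 := fun i => by have := hpa i 0; omega
      have hbb : ∀ i, b i = 2 * (b i / 2) + 1 := fun i => by have := hpb i 0; omega
      have hsa : ∑ i, (2 * (a i / 2) + 1) = 4 * m₁ := by
        rw [← hma]; exact Finset.sum_congr rfl fun i _ => (ha i).symm
      have hsb : ∑ i, (2 * (b i / 2) + 1) = 4 * m₂ := by
        rw [← hmb]; exact Finset.sum_congr rfl fun i _ => (hbb i).symm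
      obtain ⟨m, hm⟩ := sum_mul_odd_aux _ _ _ _ hsa hsb
      refine ⟨m, ?_⟩
      rw [← hm]
      exact Finset.sum_congr rfl fun i _ => by rw [← ha i, ← hbb i]

lemma memL_inner_int {x y : EuclideanSpace ℝ (Fin 8)} (hx : memL x) (hy : memL y) :
    ∃ m : ℤ, ⟪x, y⟫ = (m : ℝ) := by
  obtain ⟨a, ha, hpa, m₁, hma⟩ := hx
  obtain ⟨b, hb, hpb, m₂, hmb⟩ := hy
  obtain ⟨m, hm⟩ := int_sum_mul a b hpa hpb m₁ m₂ hma hmb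
  refine ⟨m, ?_⟩
  rw [inner_eq_sum]
  have : ∀ i ∈ Finset.univ, x i * y i = ((a i * b i : ℤ) : ℝ) / 4 := by
    intro i _
    have h1 := ha i; have h2 := hb i
    have hx' : x i = (a i : ℝ) / 2 := by linarith
    have hy' : y i = (b i : ℝ) / 2 := by linarith
    rw [hx', hy']; push_cast; ring
  rw [Finset.sum_congr rfl this, ← Finset.sum_div, ← Int.cast_sum, hm]
  push_cast; ring



-- evenness of the self inner product
lemma memL_self_even {x : EuclideanSpace ℝ (Fin 8)} (hx : memL x) :
    ∃ m : ℤ, ⟪x, x⟫ = 2 * (m : ℝ) := by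
  obtain ⟨a, ha, hpa, m₁, hma⟩ := hx
  have key : ∃ m : ℤ, ∑ i, a i * a i = 8 * m := by
    rcases Int.emod_two_eq (a 0) with h0 | h0
    · have he : ∀ i, a i = 2 * (a i / 2) := fun i => by have := hpa i 0; omega
      set s : Fin 8 → ℤ := fun i => a i / 2 with hs
      have hsum : ∑ i, s i = 2 * m₁ := by
        have h : ∑ i, a i = ∑ i, 2 * s i := Finset.sum_congr rfl fun i _ => he i
        rw [h, ← Finset.mul_sum] at hma; omega
      obtain ⟨u, hu⟩ : ∃ u : Fin 8 → ℤ, ∀ i, s i * s i = 2 * u i + s i := by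
        refine ⟨fun i => (s i * s i - s i) / 2, fun i => ?_⟩
        show s i * s i = 2 * ((s i * s i - s i) / 2) + s i
        obtain ⟨c, hc⟩ := Int.even_mul_pred_self (s i)
        have h2 : s i * s i - s i = 2 * c := by linarith [hc]
        omega
      refine ⟨(∑ i, u i) + m₁, ?_⟩
      have : ∀ i ∈ Finset.univ, a i * a i = 4 * (2 * u i + s i) := by
        intro i _
        conv_lhs => rw [he i]
        linear_combination 4 * hu i
      rw [Finset.sum_congr rfl this, ← Finset.mul_sum]
      rw [Finset.sum_add_distrib, ← Finset.mul_sum, hsum]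
      ring
    · have ho : ∀ i, a i = 2 * (a i / 2) + 1 := fun i => by have := hpa i 0; omega
      set s : Fin 8 → ℤ := fun i => a i / 2 with hs
      obtain ⟨u, hu⟩ : ∃ u : Fin 8 → ℤ, ∀ i, a i * a i = 8 * u i + 1 := by
        refine ⟨fun i => (a i * a i - 1) / 8, fun i => ?_⟩
        show a i * a i = 8 * ((a i * a i - 1) / 8) + 1
        obtain ⟨c, hc⟩ := Int.even_mul_succ_self (s i)
        have h1 : a i = 2 * s i + 1 := ho i
        have h2 : a i * a i = 8 * c + 1 := by
          linear_combination (a i + 2 * s i + 1) * h1 + 4 * hc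
        omega
      refine ⟨(∑ i, u i) + 1, ?_⟩
      rw [Finset.sum_congr rfl (fun i _ => hu i), Finset.sum_add_distrib, ← Finset.mul_sum]
      simp only [Finset.sum_const, Finset.card_univ, Fintype.card_fin, nsmul_eq_mul, mul_one]
      ring
  obtain ⟨m, hm⟩ := key
  refine ⟨m, ?_⟩
  rw [inner_eq_sum]
  have : ∀ i ∈ Finset.univ, x i * x i = ((a i * a i : ℤ) : ℝ) / 4 := by
    intro i _
    have h1 := ha i
    have hx' : x i = (a i : ℝ) / 2 := by linarith
    rw [hx']; push_cast; ring
  rw [Finset.sum_congr rfl this, ← Finset.sum_div, ← Int.cast_sum, hm]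
  push_cast; ring

-- ±1 products and sums
lemma pm_sum_prod {n : ℕ} (a : Fin n → ℤ) (h : ∀ i, a i = 1 ∨ a i = -1) :
    ∃ c : ℕ, (∑ i, a i = n - 2 * c) ∧ (∏ i, a i = (-1) ^ c) := by
  classical
  set T := Finset.univ.filter (fun i => a i = -1) with hT
  have hmem : ∀ i ∈ T, a i = -1 := fun i hi => (Finset.mem_filter.1 hi).2
  have hmem' : ∀ i ∈ Finset.univ.filter (fun i => ¬ a i = -1), a i = 1 :=
    fun i hi => (h i).resolve_right (Finset.mem_filter.1 hi).2
  have hcard : T.card + (Finset.univ.filter (fun i => ¬ a i = -1)).card = n := by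
    have h3 := Finset.card_filter_add_card_filter_not (s := Finset.univ)
      (p := fun i => a i = -1)
    simpa using h3
  refine ⟨T.card, ?_, ?_⟩
  · rw [← Finset.sum_filter_add_sum_filter_not Finset.univ (fun i => a i = -1),
      Finset.sum_congr rfl hmem, Finset.sum_congr rfl hmem']
    simp only [Finset.sum_const, nsmul_eq_mul, mul_one, mul_neg_one, ← hT]
    have hle : T.card ≤ n := by omega
    have : ((Finset.univ.filter (fun i => ¬ a i = -1)).card : ℤ) = n - T.card := by
      push_cast; omega
    rw [this]; push_cast; ring
  · rw [← Finset.prod_filter_mul_prod_filter_not Finset.univ (fun i => a i = -1),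
      Finset.prod_congr rfl hmem, Finset.prod_congr rfl hmem']
    simp [← hT]


def RpSet : Set (EuclideanSpace ℝ (Fin 8)) :=
  {x | (∃ i j : Fin 8, i < j ∧
        (x = -EuclideanSpace.single i (1 : ℝ) + EuclideanSpace.single j 1 ∨
         x = EuclideanSpace.single i (1 : ℝ) + EuclideanSpace.single j 1)) ∨
      (∃ ε : Fin 7 → ℝ, (∀ i, ε i = 1 ∨ ε i = -1) ∧ (∏ i, ε i) = 1 ∧
        x = (1 / 2 : ℝ) • (EuclideanSpace.single (7 : Fin 8) (1 : ℝ)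
          + ∑ i : Fin 7, ε i •
              EuclideanSpace.single (Fin.castLE (by norm_num) i) (1 : ℝ)))}

noncomputable def halfvec (ε : Fin 7 → ℝ) : EuclideanSpace ℝ (Fin 8) :=
  (1 / 2 : ℝ) • (EuclideanSpace.single (7 : Fin 8) (1 : ℝ)
    + ∑ i : Fin 7, ε i • EuclideanSpace.single (Fin.castLE (by norm_num) i) (1 : ℝ))

lemma mem_np {i j : Fin 8} (h : i < j) :
    -EuclideanSpace.single i (1 : ℝ) + EuclideanSpace.single j 1 ∈ RpSet :=
  Or.inl ⟨i, j, h, Or.inl rfl⟩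

lemma mem_pp {i j : Fin 8} (h : i < j) :
    EuclideanSpace.single i (1 : ℝ) + EuclideanSpace.single j 1 ∈ RpSet :=
  Or.inl ⟨i, j, h, Or.inr rfl⟩

lemma mem_half {ε : Fin 7 → ℝ} (hε : ∀ i, ε i = 1 ∨ ε i = -1) (hp : (∏ i, ε i) = 1) :
    halfvec ε ∈ RpSet :=
  Or.inr ⟨ε, hε, hp, rfl⟩

lemma inner_single (i : Fin 8) (y : EuclideanSpace ℝ (Fin 8)) :
    ⟪EuclideanSpace.single i (1 : ℝ), y⟫ = y i := by
  rw [EuclideanSpace.inner_single_left]; simp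

lemma inner_pp (i j : Fin 8) (y : EuclideanSpace ℝ (Fin 8)) :
    ⟪EuclideanSpace.single i (1 : ℝ) + EuclideanSpace.single j 1, y⟫ = y i + y j := by
  rw [inner_add_left, inner_single, inner_single]

lemma inner_np (i j : Fin 8) (y : EuclideanSpace ℝ (Fin 8)) :
    ⟪-EuclideanSpace.single i (1 : ℝ) + EuclideanSpace.single j 1, y⟫ = y j - y i := by
  rw [inner_add_left, inner_neg_left, inner_single, inner_single]; ring

lemma inner_halfvec (ε : Fin 7 → ℝ) (y : EuclideanSpace ℝ (Fin 8)) :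
    ⟪halfvec ε, y⟫ = (y 7 + ∑ i : Fin 7, ε i * y (Fin.castLE (by norm_num) i)) / 2 := by
  rw [halfvec, real_inner_smul_left, inner_add_left, inner_single, sum_inner]
  have : ∀ i ∈ Finset.univ, ⟪ε i • EuclideanSpace.single
      (Fin.castLE (by norm_num : (7:ℕ) ≤ 8) i) (1:ℝ), y⟫
      = ε i * y (Fin.castLE (by norm_num) i) := by
    intro i _
    rw [real_inner_smul_left, inner_single]
  rw [Finset.sum_congr rfl this]; ring

lemma castLE_val (i : Fin 7) : (Fin.castLE (by norm_num : (7:ℕ) ≤ 8) i : Fin 8).1 = i.1 := rfl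

lemma castLE_ne_seven (i : Fin 7) :
    (Fin.castLE (by norm_num : (7:ℕ) ≤ 8) i : Fin 8) ≠ 7 := by
  intro h
  have h1 := congrArg Fin.val h
  rw [castLE_val] at h1
  have h2 := i.2
  have h3 : ((7 : Fin 8) : ℕ) = 7 := rfl
  omega

lemma halfvec_apply (ε : Fin 7 → ℝ) (m : Fin 8) :
    halfvec ε m = if h : (m : ℕ) < 7 then ε ⟨m, h⟩ / 2 else 1 / 2 := by
  rw [halfvec]
  have hsum : (∑ i : Fin 7, ε i • EuclideanSpace.single
      (Fin.castLE (by norm_num : (7:ℕ) ≤ 8) i) (1:ℝ)) m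
      = ∑ i : Fin 7, ε i * (if m = Fin.castLE (by norm_num) i then 1 else 0) := by
    rw [WithLp.ofLp_sum, Finset.sum_apply m Finset.univ]
    refine Finset.sum_congr rfl fun i _ => ?_
    rw [PiLp.smul_apply, EuclideanSpace.single_apply, smul_eq_mul]
  rw [PiLp.smul_apply, PiLp.add_apply, hsum, EuclideanSpace.single_apply]
  by_cases h : (m : ℕ) < 7
  · have hm7 : ¬ (m = 7) := by
      intro h'; rw [h'] at h; exact absurd h (by decide)
    rw [if_neg hm7, dif_pos h]
    rw [Finset.sum_eq_single ⟨(m : ℕ), h⟩]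
    · have : m = Fin.castLE (by norm_num : (7:ℕ) ≤ 8) ⟨(m : ℕ), h⟩ := by
        apply Fin.ext; rw [castLE_val]
      rw [if_pos this, smul_eq_mul]
      ring
    · intro b _ hb
      rw [if_neg, mul_zero]
      intro hc
      apply hb
      apply Fin.ext
      have := congrArg Fin.val hc
      rw [castLE_val] at this
      exact this.symm
    · intro h'; exact absurd (Finset.mem_univ _) h'
  · have hm7 : m = 7 := by
      apply Fin.ext
      have h2 := m.2
      have h3 : ((7 : Fin 8) : ℕ) = 7 := rfl
      omega
    rw [if_pos hm7, dif_neg h]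
    have : ∀ i ∈ Finset.univ, ε i * (if m = Fin.castLE (by norm_num : (7:ℕ) ≤ 8) i
        then (1:ℝ) else 0) = 0 := by
      intro i _
      rw [if_neg, mul_zero]
      rw [hm7]
      exact fun hc => castLE_ne_seven i hc.symm
    rw [Finset.sum_congr rfl this]
    rw [Finset.sum_const, smul_zero]
    norm_num

-- norms of roots
lemma single_apply_ne {i j : Fin 8} (h : j ≠ i) : (EuclideanSpace.single i (1:ℝ)) j = 0 := by
  rw [EuclideanSpace.single_apply, if_neg h]

lemma inner_pp_self {i j : Fin 8} (h : i < j) :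
    ⟪EuclideanSpace.single i (1:ℝ) + EuclideanSpace.single j 1,
     EuclideanSpace.single i (1:ℝ) + EuclideanSpace.single j 1⟫ = 2 := by
  rw [inner_pp]
  have hij : i ≠ j := ne_of_lt h
  rw [PiLp.add_apply, PiLp.add_apply, EuclideanSpace.single_apply, EuclideanSpace.single_apply,
    EuclideanSpace.single_apply, EuclideanSpace.single_apply]
  rw [if_pos rfl, if_pos rfl, if_neg hij, if_neg (Ne.symm hij)]
  norm_num

lemma inner_np_self {i j : Fin 8} (h : i < j) :
    ⟪-EuclideanSpace.single i (1:ℝ) + EuclideanSpace.single j 1,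
     -EuclideanSpace.single i (1:ℝ) + EuclideanSpace.single j 1⟫ = 2 := by
  rw [inner_np]
  have hij : i ≠ j := ne_of_lt h
  rw [PiLp.add_apply, PiLp.add_apply, PiLp.neg_apply, PiLp.neg_apply,
    EuclideanSpace.single_apply, EuclideanSpace.single_apply,
    EuclideanSpace.single_apply, EuclideanSpace.single_apply]
  rw [if_pos rfl, if_pos rfl, if_neg hij, if_neg (Ne.symm hij)]
  norm_num

lemma inner_half_self {ε : Fin 7 → ℝ} (hε : ∀ i, ε i = 1 ∨ ε i = -1) :
    ⟪halfvec ε, halfvec ε⟫ = 2 := by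
  rw [inner_halfvec]
  have h7 : halfvec ε 7 = 1/2 := by
    rw [halfvec_apply]
    rw [dif_neg]
    decide
  have hlt : ∀ i : Fin 7, ((Fin.castLE (by norm_num : (7:ℕ) ≤ 8) i : Fin 8) : ℕ) < 7 := by
    intro i; rw [castLE_val]; exact i.2
  have hcoord : ∀ i : Fin 7, halfvec ε (Fin.castLE (by norm_num) i) = ε i / 2 := by
    intro i
    rw [halfvec_apply, dif_pos (hlt i)]
    congr 1
  rw [h7]
  have : ∀ i ∈ Finset.univ, ε i * halfvec ε (Fin.castLE (by norm_num) i) = 1/2 := by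
    intro i _
    rw [hcoord i]
    rcases hε i with h | h <;> rw [h] <;> norm_num
  rw [Finset.sum_congr rfl this]
  simp only [Finset.sum_const, Finset.card_univ, Fintype.card_fin, nsmul_eq_mul]
  norm_num

lemma root_norm {α : EuclideanSpace ℝ (Fin 8)} (hα : α ∈ RpSet) : ⟪α, α⟫ = 2 := by
  rcases hα with ⟨i, j, hij, h | h⟩ | ⟨ε, hε, hp, h⟩
  · rw [h]; exact inner_np_self hij
  · rw [h]; exact inner_pp_self hij
  · rw [h]; exact inner_half_self hε

-- roots are in the lattice
lemma memL_pp {i j : Fin 8} (h : i < j) :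
    memL (EuclideanSpace.single i (1:ℝ) + EuclideanSpace.single j 1) := by
  classical
  refine ⟨fun m => (if m = i then 2 else 0) + (if m = j then 2 else 0), fun m => ?_, fun m m' => ?_, 1, ?_⟩
  · rw [PiLp.add_apply, EuclideanSpace.single_apply, EuclideanSpace.single_apply]
    push_cast
    split_ifs <;> norm_num
  · show ((if m = i then (2:ℤ) else 0) + (if m = j then 2 else 0)) % 2
      = ((if m' = i then (2:ℤ) else 0) + (if m' = j then 2 else 0)) % 2
    split_ifs <;> norm_num
  · show ∑ m, ((if m = i then (2:ℤ) else 0) + (if m = j then 2 else 0)) = 4 * 1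
    rw [Finset.sum_add_distrib, Finset.sum_ite_eq' Finset.univ i, Finset.sum_ite_eq' Finset.univ j]
    simp

lemma memL_np {i j : Fin 8} (h : i < j) :
    memL (-EuclideanSpace.single i (1:ℝ) + EuclideanSpace.single j 1) := by
  classical
  refine ⟨fun m => (if m = i then -2 else 0) + (if m = j then 2 else 0), fun m => ?_, fun m m' => ?_, 0, ?_⟩
  · rw [PiLp.add_apply, PiLp.neg_apply, EuclideanSpace.single_apply, EuclideanSpace.single_apply]
    push_cast
    split_ifs <;> norm_num
  · show ((if m = i then (-2:ℤ) else 0) + (if m = j then 2 else 0)) % 2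
      = ((if m' = i then (-2:ℤ) else 0) + (if m' = j then 2 else 0)) % 2
    split_ifs <;> norm_num
  · show ∑ m, ((if m = i then (-2:ℤ) else 0) + (if m = j then 2 else 0)) = 4 * 0
    rw [Finset.sum_add_distrib, Finset.sum_ite_eq' Finset.univ i, Finset.sum_ite_eq' Finset.univ j]
    simp

lemma memL_half {ε : Fin 7 → ℝ} (hε : ∀ i, ε i = 1 ∨ ε i = -1) (hp : (∏ i, ε i) = 1) :
    memL (halfvec ε) := by
  classical
  set aε : Fin 7 → ℤ := fun i => if ε i = 1 then 1 else -1 with haε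
  have hcast : ∀ i, ((aε i : ℤ) : ℝ) = ε i := by
    intro i
    show ((if ε i = 1 then (1:ℤ) else -1 : ℤ) : ℝ) = ε i
    rcases hε i with h | h
    · rw [if_pos h, h]; norm_num
    · have hne : ¬ (ε i = 1) := by rw [h]; norm_num
      rw [if_neg hne, h]; norm_num
  have hpm : ∀ i, aε i = 1 ∨ aε i = -1 := by
    intro i
    show (if ε i = 1 then (1:ℤ) else -1) = 1 ∨ (if ε i = 1 then (1:ℤ) else -1) = -1
    split_ifs <;> simp
  have hprod : ∏ i, aε i = 1 := by
    have : ((∏ i, aε i : ℤ) : ℝ) = ∏ i, ε i := by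
      push_cast [← hcast]; rfl
    rw [hp] at this
    exact_mod_cast this
  obtain ⟨c, hsum, hprodc⟩ := pm_sum_prod aε hpm
  have hceven : Even c := by
    rw [hprod] at hprodc
    rcases Nat.even_or_odd c with h | h
    · exact h
    · rw [Odd.neg_one_pow h] at hprodc; norm_num at hprodc
  obtain ⟨d, hd⟩ := hceven
  refine ⟨fun m => if hm : (m : ℕ) < 7 then aε ⟨m, hm⟩ else 1, fun m => ?_, fun m m' => ?_, 2 - d, ?_⟩
  · show 2 * halfvec ε m = ((if hm : (m : ℕ) < 7 then aε ⟨m, hm⟩ else 1 : ℤ) : ℝ)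
    rw [halfvec_apply]
    by_cases hm : (m : ℕ) < 7
    · rw [dif_pos hm, dif_pos hm, hcast]; ring
    · rw [dif_neg hm, dif_neg hm]; norm_num
  · show (if hm : (m : ℕ) < 7 then aε ⟨m, hm⟩ else 1) % 2
      = (if hm : (m' : ℕ) < 7 then aε ⟨m', hm⟩ else 1) % 2
    have h1 : ∀ k : Fin 8, (if hm : (k : ℕ) < 7 then aε ⟨k, hm⟩ else 1) % 2 = 1 := by
      intro k
      split_ifs with hm
      · rcases hpm ⟨k, hm⟩ with h | h <;> rw [h] <;> decide
      · decide
    rw [h1, h1]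
  · show ∑ m : Fin 8, (if hm : (m : ℕ) < 7 then aε ⟨m, hm⟩ else 1) = 4 * (2 - d)
    rw [Fin.sum_univ_castSucc]
    have h1 : ∀ i : Fin 7, (if hm : ((Fin.castSucc i : Fin 8) : ℕ) < 7
        then aε ⟨(Fin.castSucc i : Fin 8), hm⟩ else 1) = aε i := by
      intro i
      have hm : ((Fin.castSucc i : Fin 8) : ℕ) < 7 := i.2
      rw [dif_pos hm]
      congr 1
    have h2 : (if hm : ((Fin.last 7 : Fin 8) : ℕ) < 7 then aε ⟨(Fin.last 7 : Fin 8), hm⟩ else 1) = 1 := by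
      rw [dif_neg]; decide
    rw [Finset.sum_congr rfl (fun i _ => h1 i), h2, hsum]
    omega

lemma memL_root {α : EuclideanSpace ℝ (Fin 8)} (hα : α ∈ RpSet) : memL α := by
  rcases hα with ⟨i, j, hij, h | h⟩ | ⟨ε, hε, hp, h⟩
  · rw [h]; exact memL_np hij
  · rw [h]; exact memL_pp hij
  · rw [h]; exact memL_half hε hp

lemma castSucc_eq_castLE (i : Fin 7) :
    (Fin.castSucc i : Fin 8) = Fin.castLE (by norm_num) i := rfl

lemma sum_split (y : EuclideanSpace ℝ (Fin 8)) :
    ∑ i : Fin 8, y i = (∑ i : Fin 7, y (Fin.castLE (by norm_num) i)) + y 7 := by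
  rw [Fin.sum_univ_castSucc]
  rfl

lemma dual_memL (y : EuclideanSpace ℝ (Fin 8))
    (h : ∀ α ∈ RpSet, ∃ m : ℤ, ⟪α, y⟫ = (m : ℝ)) : memL y := by
  have hpair : ∀ i j : Fin 8, i < j →
      (∃ m : ℤ, y i + y j = (m : ℝ)) ∧ (∃ m : ℤ, y j - y i = (m : ℝ)) := by
    intro i j hij
    constructor
    · obtain ⟨m, hm⟩ := h _ (mem_pp hij); rw [inner_pp] at hm; exact ⟨m, hm⟩
    · obtain ⟨m, hm⟩ := h _ (mem_np hij); rw [inner_np] at hm; exact ⟨m, hm⟩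
  have hdiag : ∀ i : Fin 8, ∃ m : ℤ, 2 * y i = (m : ℝ) := by
    intro i
    by_cases h0 : i = 0
    · obtain ⟨⟨m₁, e₁⟩, ⟨m₂, e₂⟩⟩ := hpair 0 1 (by decide)
      refine ⟨m₁ - m₂, ?_⟩
      rw [h0]; push_cast; linarith
    · obtain ⟨⟨m₁, e₁⟩, ⟨m₂, e₂⟩⟩ := hpair 0 i (Fin.pos_of_ne_zero h0)
      refine ⟨m₁ + m₂, ?_⟩
      push_cast; linarith
  choose a ha using hdiag
  have hparlt : ∀ i j : Fin 8, i < j → a i % 2 = a j % 2 := by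
    intro i j hij
    obtain ⟨m₁, e₁⟩ := (hpair i j hij).1
    have h1 : ((a i + a j : ℤ) : ℝ) = 2 * m₁ := by
      push_cast
      rw [← ha i, ← ha j]
      linarith
    have h2 : a i + a j = 2 * m₁ := by exact_mod_cast h1
    omega
  refine ⟨a, ha, fun i j => ?_, ?_⟩
  · rcases lt_trichotomy i j with hlt | heq | hgt
    · exact hparlt i j hlt
    · rw [heq]
    · exact (hparlt j i hgt).symm
  · obtain ⟨m, hm⟩ := h _ (mem_half (ε := fun _ => 1) (fun i => Or.inl rfl) (by simp))
    rw [inner_halfvec] at hm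
    simp only [one_mul] at hm
    refine ⟨m, ?_⟩
    have h1 : ((∑ i, a i : ℤ) : ℝ) = ((4 * m : ℤ) : ℝ) := by
      push_cast
      have h2 : ∀ i ∈ Finset.univ, ((a i : ℤ) : ℝ) = 2 * y i := fun i _ => (ha i).symm
      rw [Finset.sum_congr rfl h2, ← Finset.mul_sum, sum_split]
      linarith
    exact_mod_cast h1

lemma eq_comb (x : EuclideanSpace ℝ (Fin 8)) (p q : Fin 8) (hpq : p ≠ q) (c d : ℝ)
    (hc : x p = c) (hd : x q = d) (hz : ∀ i, i ≠ p → i ≠ q → x i = 0) :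
    x = c • EuclideanSpace.single p 1 + d • EuclideanSpace.single q 1 := by
  ext m
  rw [PiLp.add_apply, PiLp.smul_apply, PiLp.smul_apply,
    EuclideanSpace.single_apply, EuclideanSpace.single_apply, smul_eq_mul, smul_eq_mul]
  by_cases h1 : m = p
  · rw [if_pos h1, if_neg (by rw [h1]; exact hpq), h1, hc]; ring
  · by_cases h2 : m = q
    · rw [if_neg h1, if_pos h2, h2, hd]; ring
    · rw [if_neg h1, if_neg h2, hz m h1 h2]; ring

lemma norm_two_class {x : EuclideanSpace ℝ (Fin 8)} (hx : memL x) (h2 : ⟪x, x⟫ = 2) :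
    ∃ α ∈ RpSet, x = α ∨ x = -α := by
  classical
  obtain ⟨a, ha, hpa, m, hma⟩ := hx
  have hsq : ∑ i, a i * a i = 8 := by
    have e : ((∑ i, a i * a i : ℤ) : ℝ) = 8 := by
      rw [Int.cast_sum]
      have h3 : ∀ i ∈ Finset.univ, ((a i * a i : ℤ) : ℝ) = (2 * x i) * (2 * x i) := by
        intro i _
        rw [ha i]; push_cast; ring
      rw [Finset.sum_congr rfl h3]
      have h4 : ∑ i, (2 * x i) * (2 * x i) = 4 * ∑ i, x i * x i := by
        rw [Finset.mul_sum]; exact Finset.sum_congr rfl fun i _ => by ring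
      rw [h4, ← inner_eq_sum, h2]; norm_num
    exact_mod_cast e
  have hbound : ∀ i, a i * a i ≤ 8 := by
    intro i
    calc a i * a i ≤ ∑ j, a j * a j :=
          Finset.single_le_sum (fun j _ => mul_self_nonneg (a j)) (Finset.mem_univ i)
      _ = 8 := hsq
  have hx' : ∀ i, x i = (a i : ℝ) / 2 := fun i => by have := ha i; linarith
  rcases Int.emod_two_eq (a 0) with h0 | h0
  · -- all even
    have has : ∀ i, a i = 2 * (a i / 2) := fun i => by have := hpa i 0; omega
    set s : Fin 8 → ℤ := fun i => a i / 2 with hsdef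
    have hs2 : ∑ i, s i * s i = 2 := by
      have h5 : ∑ i, a i * a i = 4 * ∑ i, s i * s i := by
        rw [Finset.mul_sum]
        refine Finset.sum_congr rfl fun i _ => ?_
        conv_lhs => rw [has i]
        ring
      omega
    have hsb : ∀ i, s i = -1 ∨ s i = 0 ∨ s i = 1 := by
      intro i
      have hb : s i * s i ≤ 2 := by
        calc s i * s i ≤ ∑ j, s j * s j :=
              Finset.single_le_sum (fun j _ => mul_self_nonneg (s j)) (Finset.mem_univ i)
          _ = 2 := hs2
      have hlb : -1 ≤ s i := by nlinarith
      have hub : s i ≤ 1 := by nlinarith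
      omega
    set T := Finset.univ.filter (fun i => s i ≠ 0) with hT
    have hmemT : ∀ i, i ∈ T ↔ s i ≠ 0 := by
      intro i; rw [hT, Finset.mem_filter]; simp
    have hsplitT : ∑ i ∈ T, s i * s i = 2 := by
      rw [← hs2]
      symm
      rw [← Finset.sum_filter_add_sum_filter_not Finset.univ (fun i => s i ≠ 0)]
      have hz : ∑ i ∈ Finset.univ.filter (fun i => ¬ s i ≠ 0), s i * s i = 0 := by
        refine Finset.sum_eq_zero fun i hi => ?_
        have : s i = 0 := not_not.1 (Finset.mem_filter.1 hi).2
        rw [this]; ring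
      rw [hz, add_zero]
    have hone : ∀ i ∈ T, 1 ≤ s i * s i := by
      intro i hi
      rcases hsb i with h | h | h
      · rw [h]; norm_num
      · exact absurd h ((hmemT i).1 hi)
      · rw [h]; norm_num
    have hTcard : T.card ≤ 2 := by
      by_contra hc
      push_neg at hc
      have : (3 : ℤ) ≤ ∑ i ∈ T, s i * s i := by
        calc (3:ℤ) = (3:ℕ) • (1:ℤ) := by simp
          _ ≤ T.card • (1:ℤ) := by
              apply nsmul_le_nsmul_left <;> omega
          _ ≤ ∑ i ∈ T, s i * s i := Finset.card_nsmul_le_sum T _ 1 hone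
      omega
    have hmain : ∀ p q : Fin 8, p < q → s p ≠ 0 → s q ≠ 0 →
        (∀ i, i ≠ p → i ≠ q → s i = 0) → ∃ α ∈ RpSet, x = α ∨ x = -α := by
      intro p q hlt hsp hsq hz
      have hx2 : ∀ i, x i = ((s i : ℤ) : ℝ) := by
        intro i
        rw [hx']
        conv_lhs => rw [has i]
        push_cast; ring
      have hrepr : x = ((s p : ℤ) : ℝ) • EuclideanSpace.single p 1
          + ((s q : ℤ) : ℝ) • EuclideanSpace.single q 1 := by
        apply eq_comb x p q (ne_of_lt hlt) _ _ (hx2 p) (hx2 q)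
        intro i h1 h2
        rw [hx2 i, hz i h1 h2]; norm_num
      have hsp' : s p = -1 ∨ s p = 1 := by rcases hsb p with h|h|h; exacts [Or.inl h, absurd h hsp, Or.inr h]
      have hsq' : s q = -1 ∨ s q = 1 := by rcases hsb q with h|h|h; exacts [Or.inl h, absurd h hsq, Or.inr h]
      rcases hsp' with hp1 | hp1 <;> rcases hsq' with hq1 | hq1
      · -- (-1,-1): x = -(e_p + e_q)
        refine ⟨_, mem_pp hlt, Or.inr ?_⟩
        rw [hrepr, hp1, hq1]
        push_cast
        rw [neg_add]
        rw [neg_one_smul, neg_one_smul]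
      · -- (-1, 1): x = -e_p + e_q
        refine ⟨_, mem_np hlt, Or.inl ?_⟩
        rw [hrepr, hp1, hq1]
        push_cast
        rw [neg_one_smul, one_smul]
      · -- (1, -1): x = -(-e_p + e_q)
        refine ⟨_, mem_np hlt, Or.inr ?_⟩
        rw [hrepr, hp1, hq1]
        push_cast
        rw [neg_add, neg_neg, one_smul, neg_one_smul]
      · -- (1,1)
        refine ⟨_, mem_pp hlt, Or.inl ?_⟩
        rw [hrepr, hp1, hq1]
        push_cast
        rw [one_smul, one_smul]
    interval_cases hc : T.card
    · exfalso
      have : T = ∅ := Finset.card_eq_zero.1 hc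
      rw [this] at hsplitT
      simp at hsplitT
    · exfalso
      obtain ⟨p, hp⟩ := Finset.card_eq_one.1 hc
      rw [hp, Finset.sum_singleton] at hsplitT
      have hsp : s p ≠ 0 := (hmemT p).1 (by rw [hp]; exact Finset.mem_singleton_self p)
      rcases hsb p with h|h|h <;> rw [h] at hsplitT <;> simp at hsplitT <;> exact hsp h
    · obtain ⟨p, q, hpq, hpqT⟩ := Finset.card_eq_two.1 hc
      have hsp : s p ≠ 0 := (hmemT p).1 (by rw [hpqT]; simp)
      have hsq : s q ≠ 0 := (hmemT q).1 (by rw [hpqT]; simp)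
      have hz : ∀ i, i ≠ p → i ≠ q → s i = 0 := by
        intro i h1 h2
        by_contra hne
        have : i ∈ T := (hmemT i).2 hne
        rw [hpqT] at this
        simp at this
        tauto
      rcases lt_or_gt_of_ne hpq with hlt | hgt
      · exact hmain p q hlt hsp hsq hz
      · exact hmain q p hgt hsq hsp (fun i h1 h2 => hz i h2 h1)
  · -- all odd
    have hpm : ∀ i, a i = 1 ∨ a i = -1 := by
      intro i
      have h1 : a i % 2 = 1 := by have := hpa i 0; omega
      have hlb : -2 ≤ a i := by nlinarith [hbound i]
      have hub : a i ≤ 2 := by nlinarith [hbound i]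
      omega
    obtain ⟨c, hsum8, hprod8⟩ := pm_sum_prod a hpm
    have hceven : Even c := by
      rw [hma] at hsum8
      have : (8:ℤ) - 2 * c = 4 * m := by push_cast at hsum8 ⊢; omega
      have h9 : (2:ℤ) * c = 8 - 4 * m := by omega
      rcases Nat.even_or_odd c with h | h
      · exact h
      · exfalso; obtain ⟨u, hu⟩ := h; rw [hu] at h9; push_cast at h9; omega
    have hprodall : ∏ i, a i = 1 := by rw [hprod8, Even.neg_one_pow hceven]
    set σ : ℤ := a 7 with hσdef
    have hσ : σ = 1 ∨ σ = -1 := hpm 7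
    have hprodsplit : (∏ i : Fin 7, a (Fin.castLE (by norm_num) i)) * σ = 1 := by
      rw [← hprodall]
      conv_rhs => rw [Fin.prod_univ_castSucc]
      rfl
    set ε : Fin 7 → ℝ := fun i => ((σ * a (Fin.castLE (by norm_num) i) : ℤ) : ℝ) with hεdef
    have hε : ∀ i, ε i = 1 ∨ ε i = -1 := by
      intro i
      have hrfl : ε i = ((σ * a (Fin.castLE (by norm_num) i) : ℤ) : ℝ) := rfl
      rw [hrfl]
      rcases hσ with h | h <;> rcases hpm (Fin.castLE (by norm_num) i) with h' | h' <;>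
        rw [h, h'] <;> norm_num
    have hPε : ∏ i, ε i = 1 := by
      have h5 : ∏ i : Fin 7, (σ * a (Fin.castLE (by norm_num : (7:ℕ) ≤ 8) i)) = 1 := by
        rw [Finset.prod_mul_distrib, Finset.prod_const]
        have hσ7 : σ ^ (Finset.univ : Finset (Fin 7)).card = σ := by
          rcases hσ with h | h <;> rw [h] <;> simp
        rw [hσ7, mul_comm]
        exact hprodsplit
      rw [hεdef, ← Int.cast_prod, h5, Int.cast_one]
    have hσ2 : (σ : ℝ) * (σ : ℝ) = 1 := by
      rcases hσ with h | h <;> rw [h] <;> norm_num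
    have hfinal : x = ((σ : ℤ) : ℝ) • halfvec ε := by
      ext mm
      rw [PiLp.smul_apply, smul_eq_mul, halfvec_apply]
      by_cases hm : (mm : ℕ) < 7
      · rw [dif_pos hm]
        have hcast : Fin.castLE (by norm_num : (7:ℕ) ≤ 8) (⟨(mm : ℕ), hm⟩ : Fin 7) = mm :=
          Fin.ext rfl
        have : ε ⟨(mm : ℕ), hm⟩ = (σ : ℝ) * ((a mm : ℤ) : ℝ) := by
          rw [hεdef]
          show ((σ * a (Fin.castLE (by norm_num) ⟨(mm : ℕ), hm⟩) : ℤ) : ℝ) = _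
          rw [hcast]; push_cast; ring
        rw [this, hx']
        rcases hσ with h | h <;> rw [h] <;> push_cast <;> ring
      · have hm7 : mm = 7 := by
          apply Fin.ext
          have h2' := mm.2
          have h3 : ((7 : Fin 8) : ℕ) = 7 := rfl
          omega
        rw [dif_neg hm, hx', hm7, ← hσdef]
        ring

    rcases hσ with h | h
    · refine ⟨halfvec ε, mem_half hε hPε, Or.inl ?_⟩
      rw [hfinal, h]; push_cast; rw [one_smul]
    · refine ⟨halfvec ε, mem_half hε hPε, Or.inr ?_⟩
      rw [hfinal, h]; push_cast; rw [neg_one_smul]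

lemma exists_root_inner_ne (H : EuclideanSpace ℝ (Fin 8)) (hH : H ≠ 0) :
    ∃ α ∈ RpSet, ⟪α, H⟫ ≠ 0 := by
  by_contra hc
  push_neg at hc
  apply hH
  ext i
  rw [PiLp.zero_apply]
  by_cases h0 : i = 0
  · have h1 := hc _ (mem_pp (show (0:Fin 8) < 1 by decide))
    have h2 := hc _ (mem_np (show (0:Fin 8) < 1 by decide))
    rw [inner_pp] at h1
    rw [inner_np] at h2
    rw [h0]; linarith
  · have h1 := hc _ (mem_pp (Fin.pos_of_ne_zero h0))
    have h2 := hc _ (mem_np (Fin.pos_of_ne_zero h0))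
    rw [inner_pp] at h1
    rw [inner_np] at h2
    linarith

lemma reflection_aux (γ β Hv : EuclideanSpace ℝ (Fin 8)) (n g b : ℝ)
    (hHH : ⟪Hv, Hv⟫ = n) (hn0 : n ≠ 0)
    (hγγ : ⟪γ, γ⟫ = 2) (hββ : ⟪β, β⟫ = 2) (hgH : ⟪γ, Hv⟫ = g) (hbH : ⟪β, Hv⟫ = b)
    (hg : g ≠ 0) (hb : b ≠ 0)
    (heq : -(g⁻¹ • γ - n⁻¹ • Hv) = b⁻¹ • β - n⁻¹ • Hv) :
    γ - (2 * g / n) • Hv = β ∨ γ - (2 * g / n) • Hv = -β := by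
  have h1 : b⁻¹ • β = -(g⁻¹ • γ) + (n⁻¹ + n⁻¹) • Hv := by
    have h2 : b⁻¹ • β - n⁻¹ • Hv = -(g⁻¹ • γ - n⁻¹ • Hv) := heq.symm
    have h3 : b⁻¹ • β = -(g⁻¹ • γ - n⁻¹ • Hv) + n⁻¹ • Hv := by
      rw [← h2]; abel
    rw [h3, add_smul]; abel
  have hβeq : β = (-(b * g⁻¹)) • γ + (b * (n⁻¹ + n⁻¹)) • Hv := by
    calc β = b • (b⁻¹ • β) := by rw [smul_smul, mul_inv_cancel₀ hb, one_smul]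
      _ = b • (-(g⁻¹ • γ) + (n⁻¹ + n⁻¹) • Hv) := by rw [h1]
      _ = (-(b * g⁻¹)) • γ + (b * (n⁻¹ + n⁻¹)) • Hv := by
          rw [smul_add, smul_neg, smul_smul, smul_smul, ← neg_smul]
  have h5 : (2:ℝ) = (b * g⁻¹)^2 * 2 + (b * (n⁻¹ + n⁻¹))^2 * n
      - 2 * (b * g⁻¹) * (b * (n⁻¹ + n⁻¹)) * g := by
    conv_lhs => rw [← hββ]
    conv_lhs => rw [hβeq]
    rw [inner_add_left, inner_add_right, inner_add_right]
    rw [real_inner_smul_left, real_inner_smul_left, real_inner_smul_left,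
      real_inner_smul_left, real_inner_smul_right, real_inner_smul_right,
      real_inner_smul_right, real_inner_smul_right]
    have hgH' : ⟪Hv, γ⟫ = g := by rw [real_inner_comm]; exact hgH
    rw [hγγ, hHH, hgH', hgH]
    ring
  have hb2 : b^2 = g^2 := by
    field_simp at h5
    have h6 : 2*g^2*(g*n^3) = 2*b^2*(g*n^3) := by linear_combination (g*n^2) * h5
    have h7 : (2:ℝ)*g^2 = 2*b^2 :=
      mul_right_cancel₀ (mul_ne_zero hg (pow_ne_zero 3 hn0)) h6
    linarith
  have hfac : (b - g) * (b + g) = 0 := by nlinarith [hb2]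
  rcases mul_eq_zero.1 hfac with hcase | hcase
  · right
    have hbg : b = g := by linarith
    rw [hβeq, hbg]
    match_scalars
    · field_simp
    · field_simp
      ring
  · left
    have hbg : b = -g := by linarith
    rw [hβeq, hbg]
    match_scalars
    · field_simp
    · field_simp
      ring

/-- For the root system of type `E₈`, no orbit other than those through
restricted root vectors is austere: for every nonzero `H ∈ ℝ⁸` not proportional
to any positive root, the set `S_H = {α/⟪α,H⟫ - H/‖H‖²}` is not invariant under
negation. (The condition `∏ εᵢ = 1` on signs `εᵢ = ±1` encodes that the number
of minus signs `Σ ν(i)` is even.) -/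
theorem stmt_18
    (Rp : Set (EuclideanSpace ℝ (Fin 8)))
    (hRp : Rp = {x | (∃ i j : Fin 8, i < j ∧
        (x = -EuclideanSpace.single i (1 : ℝ) + EuclideanSpace.single j 1 ∨
         x = EuclideanSpace.single i (1 : ℝ) + EuclideanSpace.single j 1)) ∨
      (∃ ε : Fin 7 → ℝ, (∀ i, ε i = 1 ∨ ε i = -1) ∧ (∏ i, ε i) = 1 ∧
        x = (1 / 2 : ℝ) • (EuclideanSpace.single (7 : Fin 8) (1 : ℝ)
          + ∑ i : Fin 7, ε i •
              EuclideanSpace.single (Fin.castLE (by norm_num) i) (1 : ℝ)))})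
    (H : EuclideanSpace ℝ (Fin 8)) (hH : H ≠ 0)
    (hprop : ∀ α ∈ Rp, ∀ c : ℝ, H ≠ c • α)
    (S : Set (EuclideanSpace ℝ (Fin 8)))
    (hS : S = {y | ∃ α ∈ Rp, ⟪α, H⟫ ≠ 0 ∧ y = (⟪α, H⟫)⁻¹ • α - (‖H‖ ^ 2)⁻¹ • H}) :
    (fun y => -y) '' S ≠ S := by
  intro hsym
  have hRp' : Rp = RpSet := hRp
  rw [hRp'] at hS hprop
  clear hRp hRp' Rp
  obtain ⟨n, hndef⟩ : ∃ x : ℝ, x = ‖H‖ ^ 2 := ⟨_, rfl⟩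
  rw [← hndef] at hS
  have hnpos : 0 < n := by
    rw [hndef]
    have : ‖H‖ ≠ 0 := fun h => hH (norm_eq_zero.1 h)
    positivity
  have hn0 : n ≠ 0 := ne_of_gt hnpos
  have hHH : ⟪H, H⟫ = n := by rw [hndef]; exact real_inner_self_eq_norm_sq H
  -- Step A: reflections of non-orthogonal roots are in the lattice
  have hrefl : ∀ γ ∈ RpSet, ⟪γ, H⟫ ≠ 0 → memL (γ - (2 * ⟪γ, H⟫ / n) • H) := by
    intro γ hγ hg
    have hyS : ((⟪γ, H⟫)⁻¹ • γ - n⁻¹ • H) ∈ S := by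
      rw [hS]; exact ⟨γ, hγ, hg, rfl⟩
    have hnegS : -((⟪γ, H⟫)⁻¹ • γ - n⁻¹ • H) ∈ S := by
      rw [← hsym]; exact ⟨_, hyS, rfl⟩
    rw [hS] at hnegS
    obtain ⟨β, hβ, hb, heq⟩ := hnegS
    rcases reflection_aux γ β H n ⟪γ, H⟫ ⟪β, H⟫ hHH hn0 (root_norm hγ) (root_norm hβ)
      rfl rfl hg hb heq with h | h
    · rw [h]; exact memL_root hβ
    · rw [h]; exact memL_neg (memL_root hβ)
  -- Step B: construct the lattice vector w proportional to H
  obtain ⟨α₀, hα₀R, ha₀'⟩ := exists_root_inner_ne H hH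
  obtain ⟨aa, haa⟩ : ∃ x : ℝ, ⟪α₀, H⟫ = x := ⟨_, rfl⟩
  have ha₀ : aa ≠ 0 := by rw [← haa]; exact ha₀'
  have hw : memL ((2 * aa / n) • H) := by
    have h1 := hrefl α₀ hα₀R ha₀'
    rw [haa] at h1
    have h2 : (2 * aa / n) • H = α₀ - (α₀ - (2 * aa / n) • H) := by abel
    rw [h2]
    exact memL_sub (memL_root hα₀R) h1
  obtain ⟨w, hwdef⟩ : ∃ x : EuclideanSpace ℝ (Fin 8), x = (2 * aa / n) • H := ⟨_, rfl⟩
  rw [← hwdef] at hw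
  have hww : ⟪w, w⟫ = 4 * aa ^ 2 / n := by
    rw [hwdef, real_inner_smul_left, real_inner_smul_right, hHH]
    field_simp
    ring
  obtain ⟨k, hk⟩ := memL_self_even hw
  have hkval : (k : ℝ) = 2 * aa ^ 2 / n := by
    have h1 : 2 * (k : ℝ) = 4 * aa ^ 2 / n := by rw [← hk, hww]
    field_simp at h1 ⊢
    linarith
  have hkpos : 1 ≤ k := by
    by_contra hc
    push_neg at hc
    have h1 : (k : ℝ) ≤ 0 := by
      have : k ≤ 0 := by omega
      exact_mod_cast this
    have h2 : 0 < 2 * aa ^ 2 / n := by positivity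
    rw [hkval] at h1
    linarith
  have hk0 : (k : ℝ) ≠ 0 := by
    have : (0:ℝ) < k := by exact_mod_cast hkpos
    linarith
  have hα₀w : ⟪α₀, w⟫ = (k : ℝ) := by
    rw [hwdef, real_inner_smul_right, haa, hkval]
    ring
  have hCS : k ≤ 4 := by
    have hcs := real_inner_mul_inner_self_le α₀ w
    rw [hα₀w, root_norm hα₀R, hk] at hcs
    have hcs' : (k : ℝ) * k ≤ 2 * (2 * k) := hcs
    have hZ : k * k ≤ 2 * (2 * k) := by exact_mod_cast hcs'
    nlinarith [hZ, hkpos]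
  have hHw : H = (n / (2 * aa)) • w := by
    rw [hwdef, smul_smul]
    have hsc : n / (2 * aa) * (2 * aa / n) = 1 := by
      field_simp
    rw [hsc, one_smul]
  -- divisibility: k ∣ ⟪γ,w⟫² for every root γ
  have hdvd : ∀ γ ∈ RpSet, ∃ t : ℤ, ⟪γ, w⟫ = (t : ℝ) ∧ k ∣ t ^ 2 := by
    intro γ hγ
    obtain ⟨t, ht⟩ := memL_inner_int (memL_root hγ) hw
    refine ⟨t, ht, ?_⟩
    by_cases ht0 : t = 0
    · rw [ht0]; simp
    obtain ⟨gg, hgg⟩ : ∃ x : ℝ, ⟪γ, H⟫ = x := ⟨_, rfl⟩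
    have ht' : (t : ℝ) = 2 * aa / n * gg := by
      rw [← hgg, ← ht, hwdef, real_inner_smul_right]
    have hγH' : ⟪γ, H⟫ ≠ 0 := by
      rw [hgg]
      intro hz
      rw [hz, mul_zero] at ht'
      exact ht0 (by exact_mod_cast ht')
    have hs := hrefl γ hγ hγH'
    rw [hgg] at hs
    have hsm : (2 * gg / n) • H = ((t : ℝ) / (k : ℝ)) • w := by
      rw [hwdef, smul_smul]
      congr 1
      rw [ht', hkval]
      field_simp
    obtain ⟨u, hu⟩ := memL_inner_int (memL_root hγ) hs
    have hcomp : ⟪γ, γ - (2 * gg / n) • H⟫ = 2 - (t : ℝ) / (k : ℝ) * (t : ℝ) := by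
      rw [inner_sub_right, hsm, real_inner_smul_right, ht, root_norm hγ]
    rw [hcomp] at hu
    have hreal : (t : ℝ) ^ 2 = (k : ℝ) * (2 - (u : ℝ)) := by
      field_simp at hu
      nlinarith [hu]
    have hZ : t ^ 2 = k * (2 - u) := by exact_mod_cast hreal
    exact ⟨2 - u, hZ⟩
  -- the final contradiction helper
  have finish : ∀ y : EuclideanSpace ℝ (Fin 8),
      (∃ c : ℝ, H = c • y) → memL y → ⟪y, y⟫ = 2 → False := by
    rintro y ⟨c, hc⟩ hy h2
    obtain ⟨α, hα, hcase⟩ := norm_two_class hy h2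
    rcases hcase with hcase | hcase
    · exact hprop α hα c (by rw [hc, hcase])
    · refine hprop α hα (-c) ?_
      rw [hc, hcase, smul_neg, neg_smul]
  have hk14 : k = 1 ∨ k = 2 ∨ k = 3 ∨ k = 4 := by omega
  rcases hk14 with hk1 | hk2 | hk3 | hk4
  · -- k = 1 : w is a root
    refine finish w ⟨n / (2 * aa), hHw⟩ hw ?_
    rw [hk, hk1]; norm_num
  · -- k = 2
    subst hk2
    have hyint : ∀ α ∈ RpSet, ∃ m : ℤ, ⟪α, ((2:ℝ))⁻¹ • w⟫ = (m : ℝ) := by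
      intro α hα
      obtain ⟨t, ht, hdv⟩ := hdvd α hα
      have h2t : (2:ℤ) ∣ t := by
        have hp : Prime (2:ℤ) := Int.prime_two
        exact hp.dvd_of_dvd_pow hdv
      obtain ⟨u, hu⟩ := h2t
      refine ⟨u, ?_⟩
      rw [real_inner_smul_right, ht, hu]
      push_cast; ring
    have hyL := dual_memL _ hyint
    obtain ⟨m, hym⟩ := memL_self_even hyL
    have hyy : ⟪((2:ℝ))⁻¹ • w, ((2:ℝ))⁻¹ • w⟫ = 1 := by
      rw [real_inner_smul_left, real_inner_smul_right, hk]
      push_cast; ring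
    rw [hyy] at hym
    have : (1:ℤ) = 2 * m := by exact_mod_cast hym
    omega
  · -- k = 3
    subst hk3
    have hyint : ∀ α ∈ RpSet, ∃ m : ℤ, ⟪α, ((3:ℝ))⁻¹ • w⟫ = (m : ℝ) := by
      intro α hα
      obtain ⟨t, ht, hdv⟩ := hdvd α hα
      have h3t : (3:ℤ) ∣ t := by
        have hp : Prime (3:ℤ) := Int.prime_three
        exact hp.dvd_of_dvd_pow hdv
      obtain ⟨u, hu⟩ := h3t
      refine ⟨u, ?_⟩
      rw [real_inner_smul_right, ht, hu]
      push_cast; ring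
    have hyL := dual_memL _ hyint
    obtain ⟨m, hym⟩ := memL_self_even hyL
    have hyy : ⟪((3:ℝ))⁻¹ • w, ((3:ℝ))⁻¹ • w⟫ = 2/3 := by
      rw [real_inner_smul_left, real_inner_smul_right, hk]
      push_cast; ring
    rw [hyy] at hym
    have h23 : (2:ℝ) = 3 * (2 * (m:ℝ)) := by
      field_simp at hym
      linarith
    have hZ : (2:ℤ) = 3 * (2 * m) := by exact_mod_cast h23
    omega
  · -- k = 4
    subst hk4
    have hyint : ∀ α ∈ RpSet, ∃ m : ℤ, ⟪α, ((2:ℝ))⁻¹ • w⟫ = (m : ℝ) := by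
      intro α hα
      obtain ⟨t, ht, hdv⟩ := hdvd α hα
      have h2t : (2:ℤ) ∣ t := by
        have hp : Prime (2:ℤ) := Int.prime_two
        refine hp.dvd_of_dvd_pow (n := 2) ?_
        exact dvd_trans (by norm_num) hdv
      obtain ⟨u, hu⟩ := h2t
      refine ⟨u, ?_⟩
      rw [real_inner_smul_right, ht, hu]
      push_cast; ring
    have hyL := dual_memL _ hyint
    have hyy : ⟪((2:ℝ))⁻¹ • w, ((2:ℝ))⁻¹ • w⟫ = 2 := by
      rw [real_inner_smul_left, real_inner_smul_right, hk]
      push_cast; ring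
    refine finish (((2:ℝ))⁻¹ • w) ⟨n / aa, ?_⟩ hyL hyy
    rw [smul_smul]
    rw [hHw]
    congr 1
    field_simp
end

section
/- Let R₊ = {e₁, e₂, 2e₁, 2e₂, e₁+e₂, e₁−e₂} ⊂ ℝ² (the positive roots of type BC₂), and fix positive integers m_s, m_l, m_m; define m(e₁) = m(e₂) = m_s, m(2e₁) = m(2e₂) = m_l, and m(e₁+e₂) = m(e₁−e₂) = m_m. Let H = (1 + 1/√2, 1/√2) (that is, H = e₁ + (e₁+e₂)/√2), and for α ∈ R₊ set v_H(α) = α/⟪α,H⟫ − H/‖H‖² (note ⟪α,H⟫ ≠ 0 for every α ∈ R₊). Let A_H be the multiset consisting of m(α) copies of v_H(α) for each α ∈ R₊. Then A_H is invariant under negation (the multiset {−x : x ∈ A_H} equals A_H) if and only if m_s + m_l = m_m. -/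
open scoped RealInnerProductSpace

set_option maxHeartbeats 4000000

/-- For the restricted root system of type `BC₂` with multiplicities
`m_s` (short roots `e₁, e₂`), `m_l` (long roots `2e₁, 2e₂`), and `m_m`
(middle roots `e₁ ± e₂`), and `H = e₁ + (e₁+e₂)/√2`, the multiplicity-weighted
multiset `A_H` of vectors `v_H(α) = α/⟪α,H⟫ - H/‖H‖²` is invariant under
negation iff `m_s + m_l = m_m`. -/
theorem stmt_19 (m_s m_l m_m : ℕ) (hms : 0 < m_s) (hml : 0 < m_l) (hmm : 0 < m_m)
    (H : EuclideanSpace ℝ (Fin 2))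
    (hH : H = EuclideanSpace.single 0 (1 : ℝ)
      + (Real.sqrt 2)⁻¹ • (EuclideanSpace.single 0 (1 : ℝ) + EuclideanSpace.single 1 1))
    (v : EuclideanSpace ℝ (Fin 2) → EuclideanSpace ℝ (Fin 2))
    (hv : ∀ α, v α = (⟪α, H⟫)⁻¹ • α - (‖H‖ ^ 2)⁻¹ • H)
    (A : Multiset (EuclideanSpace ℝ (Fin 2)))
    (hA : A = Multiset.replicate m_s (v (EuclideanSpace.single 0 (1 : ℝ)))
      + Multiset.replicate m_s (v (EuclideanSpace.single 1 (1 : ℝ)))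
      + Multiset.replicate m_l (v ((2 : ℝ) • EuclideanSpace.single 0 (1 : ℝ)))
      + Multiset.replicate m_l (v ((2 : ℝ) • EuclideanSpace.single 1 (1 : ℝ)))
      + Multiset.replicate m_m
          (v (EuclideanSpace.single 0 (1 : ℝ) + EuclideanSpace.single 1 1))
      + Multiset.replicate m_m
          (v (EuclideanSpace.single 0 (1 : ℝ) - EuclideanSpace.single 1 1))) :
    A.map (fun x => -x) = A ↔ m_s + m_l = m_m := by
  set s := Real.sqrt 2 with hs
  have hs0 : (0:ℝ) < s := Real.sqrt_pos.mpr (by norm_num)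
  have hs2 : s * s = 2 := Real.mul_self_sqrt (by norm_num)
  have hsne : s ≠ 0 := ne_of_gt hs0
  have hH0 : H 0 = 1 + s⁻¹ := by rw [hH]; simp
  have hH1 : H 1 = s⁻¹ := by rw [hH]; simp
  have ip : ∀ x : EuclideanSpace ℝ (Fin 2), ⟪x, H⟫ = x 0 * (1 + s⁻¹) + x 1 * s⁻¹ := by
    intro x; simp [PiLp.inner_apply, Fin.sum_univ_two, hH0, hH1]; ring
  have nH : ‖H‖ ^ 2 = 2 + s := by
    rw [← real_inner_self_eq_norm_sq, ip, hH0, hH1]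
    field_simp
    nlinarith [hs2]
  have hsi : s⁻¹ = s/2 := by field_simp; nlinarith [hs2]
  have h3 : 1+s⁻¹ ≠ 0 := by positivity
  -- the inner products with H
  have ipa : ⟪(EuclideanSpace.single 0 (1:ℝ) : EuclideanSpace ℝ (Fin 2)), H⟫ = 1 + s⁻¹ := by
    rw [ip]; simp
  have ipb : ⟪(EuclideanSpace.single 1 (1:ℝ) : EuclideanSpace ℝ (Fin 2)), H⟫ = s⁻¹ := by
    rw [ip]; simp
  have ipc : ⟪((2:ℝ) • EuclideanSpace.single 0 (1:ℝ) : EuclideanSpace ℝ (Fin 2)), H⟫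
      = 2*(1 + s⁻¹) := by rw [ip]; simp
  have ipd : ⟪((2:ℝ) • EuclideanSpace.single 1 (1:ℝ) : EuclideanSpace ℝ (Fin 2)), H⟫
      = 2*s⁻¹ := by rw [ip]; simp
  have ipe : ⟪(EuclideanSpace.single 0 (1:ℝ) + EuclideanSpace.single 1 1 :
      EuclideanSpace ℝ (Fin 2)), H⟫ = 1 + 2*s⁻¹ := by rw [ip]; simp; ring
  have ipf : ⟪(EuclideanSpace.single 0 (1:ℝ) - EuclideanSpace.single 1 1 :
      EuclideanSpace ℝ (Fin 2)), H⟫ = 1 := by rw [ip]; simp [hsi]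
  -- explicit values of the inverses
  have ia : (1+s⁻¹)⁻¹ = 2-s := by
    rw [hsi]
    have hne : (1:ℝ)+s/2 ≠ 0 := by positivity
    field_simp
    nlinarith [hs2]
  have ib : (s⁻¹)⁻¹ = s := inv_inv s
  have ic : (2*(1+s⁻¹))⁻¹ = 1-s/2 := by
    rw [hsi]
    have hne : (2:ℝ)*(1+s/2) ≠ 0 := by positivity
    field_simp
    nlinarith [hs2]
  have id' : (2*s⁻¹)⁻¹ = s/2 := by
    rw [mul_inv, ib]; ring
  have ie : (1+2*s⁻¹)⁻¹ = s-1 := by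
    rw [hsi]
    have hne : (1:ℝ)+2*(s/2) ≠ 0 := by positivity
    field_simp
    nlinarith [hs2]
  have ig : ((2:ℝ)+s)⁻¹ = 1-s/2 := by
    have hne : (2:ℝ)+s ≠ 0 := by positivity
    field_simp
    nlinarith [hs2]
  -- abbreviations
  set w := v (EuclideanSpace.single 0 (1:ℝ) + EuclideanSpace.single 1 1) with hw
  set w' := v (EuclideanSpace.single 1 (1:ℝ)) with hw'
  have hwval : w = (s-1) • (EuclideanSpace.single 0 (1:ℝ) + EuclideanSpace.single 1 1)
      - (1-s/2) • H := by rw [hw, hv, ipe, ie, nH, ig]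
  have hw'val : w' = s • (EuclideanSpace.single 1 (1:ℝ)) - (1-s/2) • H := by
    rw [hw', hv, ipb, ib, nH, ig]
  -- coordinates of w and w'
  have hwc0 : w 0 = s - 3/2 := by
    rw [hwval]
    simp only [PiLp.sub_apply, PiLp.add_apply, PiLp.smul_apply, EuclideanSpace.single_apply,
      smul_eq_mul, hH0, hsi]
    norm_num
    nlinarith [hs2]
  have hw'c0 : w' 0 = -(1/2) := by
    rw [hw'val]
    simp only [PiLp.sub_apply, PiLp.smul_apply, EuclideanSpace.single_apply,
      smul_eq_mul, hH0, hsi]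
    norm_num
    nlinarith [hs2]
  -- identification of the six vectors
  have h1 : v (EuclideanSpace.single 0 (1:ℝ)) = -w := by
    rw [hv, ipa, ia, nH, ig, hwval]
    ext i
    fin_cases i <;>
      simp [PiLp.sub_apply, PiLp.add_apply, PiLp.smul_apply, PiLp.neg_apply,
        EuclideanSpace.single_apply, hH0, hH1, hsi] <;>
      nlinarith [hs2]
  have h2 : v ((2:ℝ) • EuclideanSpace.single 0 (1:ℝ)) = -w := by
    rw [hv, ipc, ic, nH, ig, hwval]
    ext i
    fin_cases i <;>
      simp [PiLp.sub_apply, PiLp.add_apply, PiLp.smul_apply, PiLp.neg_apply,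
        EuclideanSpace.single_apply, hH0, hH1, hsi] <;>
      nlinarith [hs2]
  have h4 : v ((2:ℝ) • EuclideanSpace.single 1 (1:ℝ)) = w' := by
    rw [hv, ipd, id', nH, ig, hw'val]
    ext i
    fin_cases i <;>
      simp [PiLp.sub_apply, PiLp.add_apply, PiLp.smul_apply, PiLp.neg_apply,
        EuclideanSpace.single_apply, hH0, hH1, hsi] <;>
      nlinarith [hs2]
  have h5 : v (EuclideanSpace.single 0 (1:ℝ) - EuclideanSpace.single 1 1) = -w' := by
    rw [hv, ipf, inv_one, nH, ig, hw'val]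
    ext i
    fin_cases i <;>
      simp [PiLp.sub_apply, PiLp.add_apply, PiLp.smul_apply, PiLp.neg_apply,
        EuclideanSpace.single_apply, hH0, hH1, hsi] <;>
      nlinarith [hs2]
  -- distinctness
  have d1 : w ≠ -w := by
    intro h
    have := congrArg (fun x : EuclideanSpace ℝ (Fin 2) => x 0) h
    simp [hwc0] at this
    nlinarith [hs2]
  have d2 : w ≠ w' := by
    intro h
    have := congrArg (fun x : EuclideanSpace ℝ (Fin 2) => x 0) h
    simp [hwc0, hw'c0] at this
    nlinarith [hs2]
  have d3 : w ≠ -w' := by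
    intro h
    have := congrArg (fun x : EuclideanSpace ℝ (Fin 2) => x 0) h
    simp [hwc0, hw'c0] at this
    nlinarith [hs2]
  classical
  rw [hA, h1, h2, h4, h5]
  constructor
  · intro h
    have hc := congrArg (Multiset.count w) h
    simp only [Multiset.map_add, Multiset.map_replicate, Multiset.count_add,
      Multiset.count_replicate, neg_neg] at hc
    simp [d1, d2, d3, d1.symm, d2.symm, d3.symm] at hc
    omega
  · intro h
    subst h
    ext x
    simp only [Multiset.map_add, Multiset.map_replicate, Multiset.count_add,
      Multiset.count_replicate, neg_neg]
    split_ifs <;> omega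
end
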